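/- Let 1 ≤ p < ∞ and θ₁, θ₂ : (0,∞) → (0,∞) be decreasing functions such that t ↦ t^{-n/p}/θᵢ(t) is almost decreasing (i = 1,2). If θ₂(t) ≤ C θ₁(t) for some C > 0 and all t > 0, then the generalized weak Morrey spaces satisfy wM^p_{θ₂}(ℝⁿ) ⊆ wM^p_{θ₁}(ℝⁿ), with ‖f‖_{wM^p_{θ₁}} ≤ C'‖f‖_{wM^p_{θ₂}} for some C' > 0; conversely, if such a norm inequality holds for all f, then θ₂ ≲ θ₁. -/

import Mathlib

open MeasureTheory Metric Set ENNReal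

noncomputable section

/-- A Young function: convex, continuous, vanishing at 0, nonnegative, tending to ∞. -/
def IsYoung (Θ : ℝ → ℝ) : Prop :=
  ConvexOn ℝ (Set.Ici 0) Θ ∧ ContinuousOn Θ (Set.Ici 0) ∧ Θ 0 = 0 ∧
  (∀ t, 0 ≤ t → 0 ≤ Θ t) ∧ Filter.Tendsto Θ Filter.atTop Filter.atTop

/-- Generalized inverse Θ⁻¹(s) = inf {r ≥ 0 : Θ r > s}. -/
def invY (Θ : ℝ → ℝ) (s : ℝ) : ℝ := sInf {r : ℝ | 0 ≤ r ∧ s < Θ r}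

abbrev En (n : ℕ) := EuclideanSpace ℝ (Fin n)

/-- Luxemburg norm on a set B. -/
def luxNorm {n : ℕ} (Θ : ℝ → ℝ) (B : Set (En n)) (f : En n → ℝ) : ℝ≥0∞ :=
  sInf {e : ℝ≥0∞ | ∃ b : ℝ, 0 < b ∧ e = ENNReal.ofReal b ∧
    ∫⁻ x in B, ENNReal.ofReal (Θ (|f x| / b)) ∂volume ≤ 1}

/-- Weak Luxemburg quasi-norm on a set B. -/
def wLuxNorm {n : ℕ} (Θ : ℝ → ℝ) (B : Set (En n)) (f : En n → ℝ) : ℝ≥0∞ :=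
  sInf {e : ℝ≥0∞ | ∃ b : ℝ, 0 < b ∧ e = ENNReal.ofReal b ∧
    ∀ t : ℝ, 0 < t → ENNReal.ofReal (Θ t) * volume {x ∈ B | t < |f x| / b} ≤ 1}

/-- Orlicz–Morrey norm (Deringoz–Guliyev–Samko). -/
def morreyNorm (n : ℕ) (θ Θ : ℝ → ℝ) (f : En n → ℝ) : ℝ≥0∞ :=
  ⨆ (a : En n) (r : ℝ) (_ : 0 < r),
    ENNReal.ofReal ((1 / θ ((volume (ball a r)).toReal ^ ((1:ℝ)/n))) *
      invY Θ (1 / (volume (ball a r)).toReal)) * luxNorm Θ (ball a r) f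

/-- Weak Orlicz–Morrey quasi-norm. -/
def wMorreyNorm (n : ℕ) (θ Θ : ℝ → ℝ) (f : En n → ℝ) : ℝ≥0∞ :=
  ⨆ (a : En n) (r : ℝ) (_ : 0 < r),
    ENNReal.ofReal ((1 / θ ((volume (ball a r)).toReal ^ ((1:ℝ)/n))) *
      invY Θ (1 / (volume (ball a r)).toReal)) * wLuxNorm Θ (ball a r) f

/-- The class G_θ : θ positive and decreasing, with t ↦ Θ⁻¹(t^{-n})/θ(t) almost decreasing. -/
def Gclass (n : ℕ) (Θ θ : ℝ → ℝ) : Prop :=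
  (∀ t : ℝ, 0 < t → 0 < θ t) ∧
  (∀ s t : ℝ, 0 < s → s ≤ t → θ t ≤ θ s) ∧
  ∃ C : ℝ, 0 < C ∧ ∀ s t : ℝ, 0 < s → s ≤ t →
    invY Θ (t ^ (-(n:ℝ))) / θ t ≤ C * (invY Θ (s ^ (-(n:ℝ))) / θ s)

/-- Θ₁ ≺ Θ₂. -/
def prec (Θ₁ Θ₂ : ℝ → ℝ) : Prop := ∃ C : ℝ, 0 < C ∧ ∀ t : ℝ, 0 < t → Θ₁ t ≤ Θ₂ (C * t)

/-- Θ₁⁻¹ ≲ Θ₂⁻¹. -/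
def invLesssim (Θ₁ Θ₂ : ℝ → ℝ) : Prop :=
  ∃ C : ℝ, 0 < C ∧ ∀ t : ℝ, 0 < t → invY Θ₁ t ≤ C * invY Θ₂ t


/-! ### Auxiliary lemmas -/

lemma invY_nonneg' (Θ : ℝ → ℝ) (s : ℝ) : 0 ≤ invY Θ s :=
  Real.sInf_nonneg (fun _ hx => hx.1)

lemma invY_rpow' {p : ℝ} (hp : 0 < p) {s : ℝ} (hs : 0 < s) :
    invY (fun t => t ^ p) s = s ^ (1/p) := by
  have hset : {r : ℝ | 0 ≤ r ∧ s < r ^ p} = Set.Ioi (s ^ (1/p)) := by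
    ext r
    simp only [Set.mem_setOf_eq, Set.mem_Ioi]
    constructor
    · rintro ⟨hr0, hsr⟩
      calc s ^ (1/p) < (r ^ p) ^ (1/p) := Real.rpow_lt_rpow hs.le hsr (by positivity)
        _ = r := by
          rw [← Real.rpow_mul hr0, mul_one_div, div_self hp.ne', Real.rpow_one]
    · intro hr
      have hr0 : 0 ≤ r := le_trans (Real.rpow_nonneg hs.le _) hr.le
      refine ⟨hr0, ?_⟩
      calc s = (s ^ (1/p)) ^ p := by
              rw [← Real.rpow_mul hs.le, one_div, inv_mul_cancel₀ hp.ne', Real.rpow_one]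
        _ < r ^ p := Real.rpow_lt_rpow (Real.rpow_nonneg hs.le _) hr hp
  rw [invY, hset, csInf_Ioi]

lemma level_set_indicator {n : ℕ} (B B₀ : Set (En n)) {b t : ℝ} (ht : 0 < t) :
    {x ∈ B | t < |B₀.indicator (fun _ => (1:ℝ)) x| / b} =
      if t < 1/b then B ∩ B₀ else ∅ := by
  ext x
  simp only [Set.mem_setOf_eq, Set.mem_inter_iff]
  split_ifs with htb
  · constructor
    · rintro ⟨hB, hlt⟩
      refine ⟨hB, ?_⟩
      by_contra hx
      rw [Set.indicator_of_notMem hx] at hlt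
      simp only [abs_zero, zero_div] at hlt
      exact absurd hlt (not_lt.mpr ht.le)
    · rintro ⟨hB, hx⟩
      refine ⟨hB, ?_⟩
      rw [Set.indicator_of_mem hx]
      simpa using htb
  · simp only [Set.mem_empty_iff_false, iff_false, not_and, not_lt]
    intro hB
    by_cases hx : x ∈ B₀
    · rw [Set.indicator_of_mem hx]
      simpa using not_lt.mp htb
    · rw [Set.indicator_of_notMem hx]
      simpa using ht.le

lemma wLux_indicator_le {n : ℕ} {p : ℝ} (hp : 0 < p) (B B₀ : Set (En n))
    {b : ℝ} (hb : 0 < b) (hm : volume (B ∩ B₀) ≤ ENNReal.ofReal (b ^ p)) :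
    wLuxNorm (fun t => t ^ p) B (B₀.indicator fun _ => 1) ≤ ENNReal.ofReal b := by
  refine sInf_le ⟨b, hb, rfl, fun t ht => ?_⟩
  rw [level_set_indicator B B₀ ht]
  split_ifs with h
  · calc ENNReal.ofReal (t ^ p) * volume (B ∩ B₀)
        ≤ ENNReal.ofReal (t ^ p) * ENNReal.ofReal (b ^ p) := by gcongr
      _ = ENNReal.ofReal ((t * b) ^ p) := by
          rw [← ENNReal.ofReal_mul (by positivity), ← Real.mul_rpow ht.le hb.le]
      _ ≤ 1 := by
          rw [← ENNReal.ofReal_one]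
          apply ENNReal.ofReal_le_ofReal
          apply Real.rpow_le_one (by positivity) _ hp.le
          have : t * b < (1/b) * b := by gcongr
          simpa [hb.ne'] using this.le
  · simp

lemma le_wLux_indicator {n : ℕ} {p : ℝ} (hp : 0 < p) (B B₀ : Set (En n))
    (hm : volume (B ∩ B₀) ≠ ∞) :
    volume (B ∩ B₀) ^ (1/p) ≤ wLuxNorm (fun t => t ^ p) B (B₀.indicator fun _ => 1) := by
  refine le_sInf ?_
  rintro e ⟨b, hb, rfl, hcond⟩
  set m := volume (B ∩ B₀) with hmdef
  have key : m ≤ ENNReal.ofReal (b ^ p) := by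
    by_contra hlt
    push_neg at hlt
    have hbp : b ^ p < m.toReal :=
      (ENNReal.ofReal_lt_iff_lt_toReal (by positivity) hm).mp hlt
    obtain ⟨u, hu1, hu2⟩ := exists_between hbp
    have hu0 : 0 < u := lt_of_le_of_lt (by positivity) hu1
    set t := u ^ (-(1/p)) with htdef
    have ht : 0 < t := Real.rpow_pos_of_pos hu0 _
    have htb : t < 1/b := by
      have h1 : u ^ (-(1/p)) < (b ^ p) ^ (-(1/p)) :=
        Real.rpow_lt_rpow_of_neg (by positivity) hu1 (neg_lt_zero.mpr (by positivity))
      calc t < (b ^ p) ^ (-(1/p)) := h1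
        _ = 1/b := by
          rw [← Real.rpow_mul hb.le, mul_neg, mul_one_div, div_self hp.ne',
            Real.rpow_neg_one, one_div]
    have hcond' := hcond t ht
    rw [level_set_indicator B B₀ ht, if_pos htb, ← hmdef] at hcond'
    change ENNReal.ofReal (t ^ p) * m ≤ 1 at hcond'
    have htp : t ^ p = u⁻¹ := by
      rw [htdef, ← Real.rpow_mul hu0.le, neg_mul, one_div, inv_mul_cancel₀ hp.ne',
        Real.rpow_neg_one]
    rw [htp] at hcond'
    have hmm : m = ENNReal.ofReal m.toReal := (ENNReal.ofReal_toReal hm).symm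
    rw [hmm, ← ENNReal.ofReal_mul (by positivity), ← ENNReal.ofReal_one] at hcond'
    have h2 := ENNReal.ofReal_le_ofReal_iff (by norm_num) |>.mp hcond'
    have h3 : m.toReal ≤ u := by
      rw [inv_mul_le_iff₀ hu0] at h2; simpa using h2
    linarith
  calc m ^ (1/p) ≤ (ENNReal.ofReal (b ^ p)) ^ (1/p) :=
        ENNReal.rpow_le_rpow key (by positivity)
    _ = ENNReal.ofReal b := by
        rw [← ENNReal.ofReal_rpow_of_pos (by positivity), ← ENNReal.rpow_mul,
          mul_one_div, div_self hp.ne', ENNReal.rpow_one]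

lemma vol_ball_eq {n : ℕ} (a : En n) {r : ℝ} (hr : 0 ≤ r) (hn : 0 < n) :
    volume (ball a r) = ENNReal.ofReal (r ^ n * (volume (ball (0:En n) 1)).toReal) := by
  haveI : Nontrivial (En n) :=
    Module.nontrivial_of_finrank_pos (R := ℝ) (by rw [finrank_euclideanSpace_fin]; exact hn)
  rw [Measure.addHaar_ball volume a hr, finrank_euclideanSpace_fin,
    ENNReal.ofReal_mul (by positivity), ENNReal.ofReal_toReal measure_ball_lt_top.ne]

lemma unit_ball_vol_pos (n : ℕ) : 0 < (volume (ball (0:En n) 1)).toReal :=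
  ENNReal.toReal_pos (measure_ball_pos volume 0 one_pos).ne' measure_ball_lt_top.ne

lemma rpow_pow_mul {n : ℕ} (hn : 0 < n) {r c : ℝ} (hr : 0 < r) (hc : 0 < c) :
    (r ^ n * c) ^ ((1:ℝ)/n) = c ^ ((1:ℝ)/n) * r := by
  rw [Real.mul_rpow (by positivity) hc.le, ← Real.rpow_natCast r n,
    ← Real.rpow_mul hr.le, mul_one_div, div_self (Nat.cast_ne_zero.mpr hn.ne'),
    Real.rpow_one, mul_comm]

theorem stmt12 (n : ℕ) (hn : 0 < n) (p : ℝ) (hp : 1 ≤ p) (θ₁ θ₂ : ℝ → ℝ)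
    (hθ₁pos : ∀ t : ℝ, 0 < t → 0 < θ₁ t) (hθ₂pos : ∀ t : ℝ, 0 < t → 0 < θ₂ t)
    (hθ₁dec : ∀ s t : ℝ, 0 < s → s ≤ t → θ₁ t ≤ θ₁ s)
    (hθ₂dec : ∀ s t : ℝ, 0 < s → s ≤ t → θ₂ t ≤ θ₂ s)
    (hθ₁ad : ∃ C : ℝ, 0 < C ∧ ∀ s t : ℝ, 0 < s → s ≤ t →
      t ^ (-(n:ℝ)/p) / θ₁ t ≤ C * (s ^ (-(n:ℝ)/p) / θ₁ s))
    (hθ₂ad : ∃ C : ℝ, 0 < C ∧ ∀ s t : ℝ, 0 < s → s ≤ t →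
      t ^ (-(n:ℝ)/p) / θ₂ t ≤ C * (s ^ (-(n:ℝ)/p) / θ₂ s)) :
    ((∃ C : ℝ, 0 < C ∧ ∀ t : ℝ, 0 < t → θ₂ t ≤ C * θ₁ t) →
      ∃ C' : ℝ, 0 < C' ∧ ∀ f : En n → ℝ, Measurable f →
        wMorreyNorm n θ₁ (fun t => t ^ p) f ≤
          ENNReal.ofReal C' * wMorreyNorm n θ₂ (fun t => t ^ p) f) ∧
    ((∃ C' : ℝ, 0 < C' ∧ ∀ f : En n → ℝ, Measurable f →
        wMorreyNorm n θ₁ (fun t => t ^ p) f ≤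
          ENNReal.ofReal C' * wMorreyNorm n θ₂ (fun t => t ^ p) f) →
      ∃ C : ℝ, 0 < C ∧ ∀ t : ℝ, 0 < t → θ₂ t ≤ C * θ₁ t) := by
  have hp0 : 0 < p := lt_of_lt_of_le one_pos hp
  constructor
  · -- Direction 1
    rintro ⟨C, hC, hCle⟩
    refine ⟨C, hC, fun f hf => ?_⟩
    rw [wMorreyNorm, wMorreyNorm]
    refine iSup_le fun a => iSup_le fun r => iSup_le fun hr => ?_
    have hv : 0 < (volume (ball a r)).toReal :=
      ENNReal.toReal_pos (measure_ball_pos volume a hr).ne' measure_ball_lt_top.ne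
    have hu : 0 < (volume (ball a r)).toReal ^ ((1:ℝ)/n) := Real.rpow_pos_of_pos hv _
    set u := (volume (ball a r)).toReal ^ ((1:ℝ)/n)
    set q := invY (fun t => t ^ p) (1 / (volume (ball a r)).toReal) with hq
    have hq0 : 0 ≤ q := invY_nonneg' _ _
    have hcoef : ENNReal.ofReal ((1 / θ₁ u) * q) ≤
        ENNReal.ofReal C * ENNReal.ofReal ((1 / θ₂ u) * q) := by
      rw [← ENNReal.ofReal_mul hC.le]
      apply ENNReal.ofReal_le_ofReal
      have h1 : 1 / θ₁ u ≤ C * (1 / θ₂ u) := by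
        rw [mul_one_div, div_le_div_iff₀ (hθ₁pos u hu) (hθ₂pos u hu)]
        linarith [hCle u hu]
      calc (1 / θ₁ u) * q ≤ (C * (1 / θ₂ u)) * q :=
            mul_le_mul_of_nonneg_right h1 hq0
        _ = C * ((1 / θ₂ u) * q) := by ring
    calc ENNReal.ofReal ((1 / θ₁ u) * q) * wLuxNorm (fun t => t ^ p) (ball a r) f
        ≤ (ENNReal.ofReal C * ENNReal.ofReal ((1 / θ₂ u) * q)) *
            wLuxNorm (fun t => t ^ p) (ball a r) f := mul_le_mul_left hcoef _
      _ = ENNReal.ofReal C * (ENNReal.ofReal ((1 / θ₂ u) * q) *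
            wLuxNorm (fun t => t ^ p) (ball a r) f) := by ring
      _ ≤ ENNReal.ofReal C * ⨆ (a : En n) (r : ℝ) (_ : 0 < r),
            ENNReal.ofReal ((1 / θ₂ ((volume (ball a r)).toReal ^ ((1:ℝ)/n))) *
              invY (fun t => t ^ p) (1 / (volume (ball a r)).toReal)) *
              wLuxNorm (fun t => t ^ p) (ball a r) f := by
          gcongr
          exact le_iSup_of_le a (le_iSup_of_le r (le_iSup_of_le hr le_rfl))
  · -- Direction 2
    rintro ⟨C', hC', hnorm⟩
    obtain ⟨C₂, hC₂, had⟩ := hθ₂ad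
    set C₃ := max C₂ 1 with hC₃def
    have hC₃ : 0 < C₃ := lt_of_lt_of_le one_pos (le_max_right _ _)
    have hC₃1 : C₂ ≤ C₃ := le_max_left _ _
    have hC₃one : (1:ℝ) ≤ C₃ := le_max_right _ _
    set c := (volume (ball (0:En n) 1)).toReal with hcdef
    have hc : 0 < c := unit_ball_vol_pos n
    set κ := c ^ ((1:ℝ)/n) with hκdef
    have hκ : 0 < κ := Real.rpow_pos_of_pos hc _
    refine ⟨C' * C₃, by positivity, fun t ht => ?_⟩
    set s := t / κ with hsdef
    have hs : 0 < s := div_pos ht hκ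
    have hts : κ * s = t := by rw [hsdef]; field_simp
    set f := (ball (0:En n) s).indicator (fun _ => (1:ℝ)) with hfdef
    have hf : Measurable f := measurable_const.indicator measurableSet_ball
    -- the monotone quotient inequality with C₃
    have had3 : ∀ a b : ℝ, 0 < a → a ≤ b →
        b ^ (-((n:ℝ)/p)) / θ₂ b ≤ C₃ * (a ^ (-((n:ℝ)/p)) / θ₂ a) := by
      intro a b ha hab
      have h := had a b ha hab
      rw [neg_div] at h
      refine h.trans ?_
      have h0 : 0 ≤ a ^ (-((n:ℝ)/p)) / θ₂ a := by
        have := hθ₂pos a ha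
        positivity
      nlinarith
    -- volume facts
    have hvol : ∀ (a : En n) (r : ℝ), 0 < r →
        volume (ball a r) = ENNReal.ofReal (r ^ n * c) := fun a r hr =>
      vol_ball_eq a hr.le hn
    have hvtr : ∀ (a : En n) (r : ℝ), 0 < r →
        (volume (ball a r)).toReal = r ^ n * c := by
      intro a r hr
      rw [hvol a r hr, ENNReal.toReal_ofReal (by positivity)]
    -- key1 : lower bound for the θ₁-norm
    have key1 : ENNReal.ofReal (1 / θ₁ t) ≤ wMorreyNorm n θ₁ (fun t => t ^ p) f := by
      rw [wMorreyNorm]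
      refine le_iSup_of_le 0 (le_iSup_of_le s (le_iSup_of_le hs ?_))
      have hv : (volume (ball (0:En n) s)).toReal = s ^ n * c := hvtr 0 s hs
      have hvpos : (0:ℝ) < s ^ n * c := by positivity
      rw [hv, rpow_pow_mul hn hs hc, ← hκdef, hts,
        invY_rpow' hp0 (by positivity : (0:ℝ) < 1 / (s ^ n * c))]
      have hw : ENNReal.ofReal ((s ^ n * c) ^ ((1:ℝ)/p)) ≤
          wLuxNorm (fun t => t ^ p) (ball (0:En n) s) f := by
        have h1 := le_wLux_indicator (n := n) hp0 (ball (0:En n) s) (ball (0:En n) s)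
          (by rw [Set.inter_self, hvol 0 s hs]; exact ENNReal.ofReal_ne_top)
        rw [Set.inter_self, hvol 0 s hs,
          ENNReal.ofReal_rpow_of_pos hvpos] at h1
        exact h1
      calc ENNReal.ofReal (1 / θ₁ t)
          = ENNReal.ofReal ((1 / θ₁ t) * (1 / (s ^ n * c)) ^ ((1:ℝ)/p)) *
              ENNReal.ofReal ((s ^ n * c) ^ ((1:ℝ)/p)) := by
            rw [← ENNReal.ofReal_mul (by have := hθ₁pos t ht; positivity)]
            congr 1
            rw [mul_assoc, ← Real.mul_rpow (by positivity) (by positivity),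
              one_div (s ^ n * c), inv_mul_cancel₀ hvpos.ne', Real.one_rpow, mul_one]
        _ ≤ _ := mul_le_mul_right hw _
    -- key2 : upper bound for the θ₂-norm
    have key2 : wMorreyNorm n θ₂ (fun t => t ^ p) f ≤ ENNReal.ofReal (C₃ / θ₂ t) := by
      rw [wMorreyNorm]
      refine iSup_le fun a => iSup_le fun r => iSup_le fun hr => ?_
      have hv : (volume (ball a r)).toReal = r ^ n * c := hvtr a r hr
      have hvpos : (0:ℝ) < r ^ n * c := by positivity
      rw [hv, rpow_pow_mul hn hr hc, ← hκdef,
        invY_rpow' hp0 (by positivity : (0:ℝ) < 1 / (r ^ n * c))]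
      have hθ₂κr : 0 < θ₂ (κ * r) := hθ₂pos _ (by positivity)
      have hθ₂t : 0 < θ₂ t := hθ₂pos t ht
      rcases le_or_gt r s with hrs | hsr
      · -- small balls
        have hw : wLuxNorm (fun t => t ^ p) (ball a r) f ≤
            ENNReal.ofReal ((r ^ n * c) ^ ((1:ℝ)/p)) := by
          apply wLux_indicator_le hp0 _ _ (by positivity)
          rw [← Real.rpow_mul hvpos.le, one_div, inv_mul_cancel₀ hp0.ne',
            Real.rpow_one, ← hvol a r hr]
          exact measure_mono Set.inter_subset_left
        calc ENNReal.ofReal ((1 / θ₂ (κ * r)) * (1 / (r ^ n * c)) ^ ((1:ℝ)/p)) *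
              wLuxNorm (fun t => t ^ p) (ball a r) f
            ≤ ENNReal.ofReal ((1 / θ₂ (κ * r)) * (1 / (r ^ n * c)) ^ ((1:ℝ)/p)) *
              ENNReal.ofReal ((r ^ n * c) ^ ((1:ℝ)/p)) := mul_le_mul_right hw _
          _ = ENNReal.ofReal (1 / θ₂ (κ * r)) := by
              rw [← ENNReal.ofReal_mul (by positivity)]
              congr 1
              rw [mul_assoc, ← Real.mul_rpow (by positivity) (by positivity),
                one_div (r ^ n * c), inv_mul_cancel₀ hvpos.ne', Real.one_rpow, mul_one]
          _ ≤ ENNReal.ofReal (C₃ / θ₂ t) := by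
              apply ENNReal.ofReal_le_ofReal
              have h1 : θ₂ t ≤ θ₂ (κ * r) := by
                rw [← hts]
                exact hθ₂dec (κ * r) (κ * s) (by positivity) (by nlinarith)
              rw [div_le_div_iff₀ hθ₂κr hθ₂t]
              nlinarith [hθ₂κr, hθ₂t]
      · -- large balls
        have hmle : volume (ball a r ∩ ball (0:En n) s) ≤
            ENNReal.ofReal (((s ^ n * c) ^ ((1:ℝ)/p)) ^ p) := by
          rw [← Real.rpow_mul (by positivity : (0:ℝ) ≤ s ^ n * c), one_div,
            inv_mul_cancel₀ hp0.ne', Real.rpow_one, ← hvol 0 s hs]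
          exact measure_mono Set.inter_subset_right
        have hw : wLuxNorm (fun t => t ^ p) (ball a r) f ≤
            ENNReal.ofReal ((s ^ n * c) ^ ((1:ℝ)/p)) :=
          wLux_indicator_le hp0 _ _ (by positivity) hmle
        calc ENNReal.ofReal ((1 / θ₂ (κ * r)) * (1 / (r ^ n * c)) ^ ((1:ℝ)/p)) *
              wLuxNorm (fun t => t ^ p) (ball a r) f
            ≤ ENNReal.ofReal ((1 / θ₂ (κ * r)) * (1 / (r ^ n * c)) ^ ((1:ℝ)/p)) *
              ENNReal.ofReal ((s ^ n * c) ^ ((1:ℝ)/p)) := mul_le_mul_right hw _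
          _ = ENNReal.ofReal ((1 / θ₂ (κ * r)) *
                ((1 / (r ^ n * c)) ^ ((1:ℝ)/p) * (s ^ n * c) ^ ((1:ℝ)/p))) := by
              rw [← ENNReal.ofReal_mul (by positivity), mul_assoc]
          _ ≤ ENNReal.ofReal (C₃ / θ₂ t) := by
              apply ENNReal.ofReal_le_ofReal
              have hsr' : s ≤ r := hsr.le
              -- the product of powers equals (κs)^q * (κr)^{-q}
              have hq : (0:ℝ) < (n:ℝ)/p := by positivity
              have hprod : (1 / (r ^ n * c)) ^ ((1:ℝ)/p) * (s ^ n * c) ^ ((1:ℝ)/p)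
                  = (κ * s) ^ ((n:ℝ)/p) * (κ * r) ^ (-((n:ℝ)/p)) := by
                rw [← Real.mul_rpow (by positivity) (by positivity),
                  Real.rpow_neg (by positivity), ← div_eq_mul_inv,
                  ← Real.div_rpow (by positivity) (by positivity : (0:ℝ) ≤ κ * r)]
                rw [show (1 / (r ^ n * c)) * (s ^ n * c) = (s/r) ^ n by
                  rw [one_div_mul_eq_div, div_pow s r n, div_eq_div_iff (by positivity) (by positivity)]
                  ring]
                rw [show κ * s / (κ * r) = s / r by
                  rw [mul_div_mul_left _ _ hκ.ne']]
                rw [← Real.rpow_natCast (s/r) n, ← Real.rpow_mul (by positivity),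
                  mul_one_div]
              rw [hprod]
              have hineq := had3 (κ * s) (κ * r) (by positivity) (by nlinarith)
              have hκs : (0:ℝ) < (κ * s) ^ ((n:ℝ)/p) := Real.rpow_pos_of_pos (by positivity) _
              have hfin : (κ * s) ^ ((n:ℝ)/p) * (κ * s) ^ (-((n:ℝ)/p)) = 1 := by
                rw [← Real.rpow_add (by positivity), add_neg_cancel, Real.rpow_zero]
              calc (1 / θ₂ (κ * r)) * ((κ * s) ^ ((n:ℝ)/p) * (κ * r) ^ (-((n:ℝ)/p)))
                  = (κ * s) ^ ((n:ℝ)/p) * ((κ * r) ^ (-((n:ℝ)/p)) / θ₂ (κ * r)) := by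
                    ring
                _ ≤ (κ * s) ^ ((n:ℝ)/p) * (C₃ * ((κ * s) ^ (-((n:ℝ)/p)) / θ₂ (κ * s))) :=
                    mul_le_mul_of_nonneg_left hineq hκs.le
                _ = C₃ * ((κ * s) ^ ((n:ℝ)/p) * (κ * s) ^ (-((n:ℝ)/p))) / θ₂ (κ * s) := by
                    ring
                _ = C₃ / θ₂ t := by rw [hfin, mul_one, hts]
    -- combine
    have hfull := (key1.trans (hnorm f hf)).trans
      (mul_le_mul_right key2 (ENNReal.ofReal C'))
    rw [← ENNReal.ofReal_mul hC'.le] at hfull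
    have hθ₁t := hθ₁pos t ht
    have hθ₂t := hθ₂pos t ht
    have hreal : 1 / θ₁ t ≤ C' * (C₃ / θ₂ t) :=
      (ENNReal.ofReal_le_ofReal_iff (by positivity)).mp hfull
    rw [div_le_iff₀ hθ₁t, mul_comm] at hreal
    have : θ₂ t * (1) ≤ θ₂ t * (θ₁ t * (C' * (C₃ / θ₂ t))) := by nlinarith
    calc θ₂ t ≤ θ₂ t * (θ₁ t * (C' * (C₃ / θ₂ t))) := by simpa using this
      _ = (C' * C₃) * θ₁ t * (θ₂ t / θ₂ t) := by ring
      _ = (C' * C₃) * θ₁ t := by rw [div_self hθ₂t.ne', mul_one]
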